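/- arXiv:1001.2962 — 2 statements merged into one kernel-verified Lean document; each statement's English description precedes it below -/
import Mathlib

section
/- For real σ > 1, log ζ(σ) - (1/2) log ζ(2σ) = (1/2) log(ζ(σ)²/ζ(2σ)) is positive and is strictly decreasing as a function of σ on (1,∞). -/
set_option autoImplicit false
open Complex

private lemma t_pos (p : Nat.Primes) (σ : ℝ) : 0 < ((p : ℕ) : ℝ) ^ (-σ) :=
  Real.rpow_pos_of_pos (by exact_mod_cast p.2.pos) _

private lemma t_le (p : Nat.Primes) {σ : ℝ} (hσ : 1 < σ) : ((p : ℕ) : ℝ) ^ (-σ) ≤ 1 / 2 := by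
  have hp : (2 : ℝ) ≤ ((p : ℕ) : ℝ) := by exact_mod_cast p.2.two_le
  have h1 : ((p : ℕ) : ℝ) ^ (-σ) ≤ (2 : ℝ) ^ (-σ) := by
    rw [Real.rpow_neg (by linarith), Real.rpow_neg (by norm_num)]
    exact inv_anti₀ (Real.rpow_pos_of_pos (by norm_num) _)
      (Real.rpow_le_rpow (by norm_num) hp (by linarith))
  have h2 : (2 : ℝ) ^ (-σ) ≤ 1 / 2 := by
    have h := Real.rpow_le_rpow_of_exponent_le (x := (2:ℝ)) (by norm_num)
      (show -σ ≤ -1 by linarith)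
    rw [Real.rpow_neg_one] at h
    norm_num at h
    linarith
  linarith

private lemma t_lt_one (p : Nat.Primes) {σ : ℝ} (hσ : 1 < σ) : ((p : ℕ) : ℝ) ^ (-σ) < 1 := by
  have := t_le p hσ; linarith

private lemma summable_t {σ : ℝ} (hσ : 1 < σ) :
    Summable (fun p : Nat.Primes => ((p : ℕ) : ℝ) ^ (-σ)) := by
  have h : Summable (fun n : ℕ => (n : ℝ) ^ (-σ)) :=
    Real.summable_nat_rpow.mpr (by linarith)
  exact h.subtype _

private lemma neg_log_le {t : ℝ} (h0 : 0 < t) (h : t ≤ 1 / 2) : -Real.log (1 - t) ≤ 2 * t := by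
  have h1 : 0 < 1 - t := by linarith
  have h2 := Real.log_le_sub_one_of_pos (show (0:ℝ) < (1 - t)⁻¹ by positivity)
  rw [Real.log_inv] at h2
  have h3 : (1 - t)⁻¹ ≤ 1 + 2 * t := by
    rw [inv_le_iff_one_le_mul₀ h1]; nlinarith
  linarith

private lemma summable_neglog {σ : ℝ} (hσ : 1 < σ) :
    Summable (fun p : Nat.Primes => -Real.log (1 - ((p : ℕ) : ℝ) ^ (-σ))) := by
  refine Summable.of_nonneg_of_le (fun p => ?_) (fun p => neg_log_le (t_pos p σ) (t_le p hσ))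
    ((summable_t hσ).mul_left 2)
  have := t_pos p σ; have := t_lt_one p hσ
  have := Real.log_nonpos (by linarith) (by linarith : 1 - ((p:ℕ):ℝ) ^ (-σ) ≤ 1)
  linarith

private lemma zeta_eq {σ : ℝ} (hσ : 1 < σ) :
    riemannZeta (σ : ℂ) =
      ((Real.exp (∑' p : Nat.Primes, -Real.log (1 - ((p : ℕ) : ℝ) ^ (-σ))) : ℝ) : ℂ) := by
  have h := riemannZeta_eulerProduct_exp_log (s := (σ : ℂ)) (by simp [hσ])
  rw [← h]
  rw [Complex.ofReal_exp, Complex.ofReal_tsum]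
  refine congrArg Complex.exp (tsum_congr fun p => ?_).symm
  have hterm : ((1 - ((p : ℕ) : ℝ) ^ (-σ) : ℝ) : ℂ) = 1 - ((p : ℕ) : ℂ) ^ (-(σ : ℂ)) := by
    push_cast [Complex.ofReal_cpow (by positivity : (0:ℝ) ≤ ((p:ℕ):ℝ))]
    ring_nf
  have hpos : (0:ℝ) ≤ 1 - ((p : ℕ) : ℝ) ^ (-σ) := by have := t_lt_one p hσ; linarith
  rw [Complex.ofReal_neg, Complex.ofReal_log hpos, hterm]

private lemma log_zeta {σ : ℝ} (hσ : 1 < σ) :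
    Real.log ((riemannZeta (σ : ℂ)).re) =
      ∑' p : Nat.Primes, -Real.log (1 - ((p : ℕ) : ℝ) ^ (-σ)) := by
  rw [zeta_eq hσ, Complex.ofReal_re, Real.log_exp]

private lemma zeta_re_pos {σ : ℝ} (hσ : 1 < σ) : 0 < (riemannZeta (σ : ℂ)).re := by
  rw [zeta_eq hσ, Complex.ofReal_re]; exact Real.exp_pos _

private lemma sq_eq (p : Nat.Primes) (σ : ℝ) :
    ((p : ℕ) : ℝ) ^ (-(2 * σ)) = (((p : ℕ) : ℝ) ^ (-σ)) ^ 2 := by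
  rw [← Real.rpow_natCast (((p:ℕ):ℝ) ^ (-σ)) 2, ← Real.rpow_mul (by positivity)]
  norm_num; ring_nf

private noncomputable def F (σ : ℝ) : ℝ :=
  ∑' p : Nat.Primes,
    (1 / 2) * Real.log ((1 + ((p : ℕ) : ℝ) ^ (-σ)) / (1 - ((p : ℕ) : ℝ) ^ (-σ)))

private lemma term_eq (p : Nat.Primes) {σ : ℝ} (hσ : 1 < σ) :
    (1 / 2) * Real.log ((1 + ((p : ℕ) : ℝ) ^ (-σ)) / (1 - ((p : ℕ) : ℝ) ^ (-σ))) =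
      -Real.log (1 - ((p : ℕ) : ℝ) ^ (-σ)) -
        (1 / 2) * -Real.log (1 - ((p : ℕ) : ℝ) ^ (-(2 * σ))) := by
  set t := ((p : ℕ) : ℝ) ^ (-σ) with ht
  have h0 : 0 < t := t_pos p σ
  have h1 : t < 1 := t_lt_one p hσ
  rw [sq_eq p σ]
  have h2 : 1 - t ^ 2 = (1 - t) * (1 + t) := by ring
  rw [h2, Real.log_mul (by nlinarith) (by nlinarith),
    Real.log_div (by nlinarith) (by nlinarith)]
  ring

private lemma summable_F {σ : ℝ} (hσ : 1 < σ) :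
    Summable (fun p : Nat.Primes =>
      (1 / 2) * Real.log ((1 + ((p : ℕ) : ℝ) ^ (-σ)) / (1 - ((p : ℕ) : ℝ) ^ (-σ)))) := by
  have h2σ : 1 < 2 * σ := by linarith
  have := (summable_neglog hσ).sub ((summable_neglog h2σ).mul_left (1 / 2))
  exact this.congr fun p => (term_eq p hσ).symm

private lemma F_eq {σ : ℝ} (hσ : 1 < σ) :
    Real.log ((riemannZeta (σ : ℂ)).re) -
      (1 / 2) * Real.log ((riemannZeta (2 * (σ : ℂ))).re) = F σ := by
  have h2σ : 1 < 2 * σ := by linarith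
  have hc : (2 * (σ : ℂ)) = ((2 * σ : ℝ) : ℂ) := by push_cast; ring
  rw [hc, log_zeta hσ, log_zeta h2σ, ← tsum_mul_left,
    ← Summable.tsum_sub (summable_neglog hσ) ((summable_neglog h2σ).mul_left (1 / 2))]
  exact tsum_congr fun p => (term_eq p hσ).symm

private lemma term_pos (p : Nat.Primes) {σ : ℝ} (hσ : 1 < σ) :
    0 < (1 / 2) * Real.log ((1 + ((p : ℕ) : ℝ) ^ (-σ)) / (1 - ((p : ℕ) : ℝ) ^ (-σ))) := by
  have h0 := t_pos p σ; have h1 := t_lt_one p hσ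
  have : (1 : ℝ) < (1 + ((p : ℕ) : ℝ) ^ (-σ)) / (1 - ((p : ℕ) : ℝ) ^ (-σ)) := by
    rw [lt_div_iff₀ (by linarith)]; linarith
  have := Real.log_pos this
  linarith

private lemma term_mono (p : Nat.Primes) {σ₁ σ₂ : ℝ} (h1 : 1 < σ₁) (h2 : 1 < σ₂)
    (h12 : σ₁ < σ₂) :
    (1 / 2) * Real.log ((1 + ((p : ℕ) : ℝ) ^ (-σ₂)) / (1 - ((p : ℕ) : ℝ) ^ (-σ₂))) ≤
      (1 / 2) * Real.log ((1 + ((p : ℕ) : ℝ) ^ (-σ₁)) / (1 - ((p : ℕ) : ℝ) ^ (-σ₁))) := by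
  set t₁ := ((p : ℕ) : ℝ) ^ (-σ₁)
  set t₂ := ((p : ℕ) : ℝ) ^ (-σ₂)
  have ht : t₂ ≤ t₁ :=
    Real.rpow_le_rpow_of_exponent_le (by exact_mod_cast p.2.one_lt.le) (by linarith)
  have h01 : 0 < t₁ := t_pos p σ₁
  have h02 : 0 < t₂ := t_pos p σ₂
  have hl1 : t₁ < 1 := t_lt_one p h1
  have hl2 : t₂ < 1 := t_lt_one p h2
  have hdiv : (1 + t₂) / (1 - t₂) ≤ (1 + t₁) / (1 - t₁) := by
    rw [div_le_div_iff₀ (by linarith) (by linarith)]; nlinarith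
  have := Real.log_le_log (div_pos (by linarith) (by linarith)) hdiv
  linarith

private lemma term_strict {σ₁ σ₂ : ℝ} (h1 : 1 < σ₁) (h2 : 1 < σ₂) (h12 : σ₁ < σ₂) :
    (1 / 2) * Real.log ((1 + (((⟨2, Nat.prime_two⟩ : Nat.Primes) : ℕ) : ℝ) ^ (-σ₂)) /
        (1 - (((⟨2, Nat.prime_two⟩ : Nat.Primes) : ℕ) : ℝ) ^ (-σ₂))) <
      (1 / 2) * Real.log ((1 + (((⟨2, Nat.prime_two⟩ : Nat.Primes) : ℕ) : ℝ) ^ (-σ₁)) /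
        (1 - (((⟨2, Nat.prime_two⟩ : Nat.Primes) : ℕ) : ℝ) ^ (-σ₁))) := by
  set p : Nat.Primes := ⟨2, Nat.prime_two⟩
  set t₁ := ((p : ℕ) : ℝ) ^ (-σ₁)
  set t₂ := ((p : ℕ) : ℝ) ^ (-σ₂)
  have hp : ((p : ℕ) : ℝ) = 2 := by norm_num [p]
  have ht : t₂ < t₁ := by
    simp only [t₁, t₂, hp]
    exact Real.rpow_lt_rpow_of_exponent_lt (by norm_num) (by linarith)
  have h01 : 0 < t₁ := t_pos p σ₁
  have h02 : 0 < t₂ := t_pos p σ₂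
  have hl1 : t₁ < 1 := t_lt_one p h1
  have hl2 : t₂ < 1 := t_lt_one p h2
  have hdiv : (1 + t₂) / (1 - t₂) < (1 + t₁) / (1 - t₁) := by
    rw [div_lt_div_iff₀ (by linarith) (by linarith)]; nlinarith
  have := Real.log_lt_log (div_pos (by linarith) (by linarith)) hdiv
  linarith

theorem stmt4 :
    (∀ σ : ℝ, 1 < σ →
      Real.log ((riemannZeta σ).re) - (1 / 2) * Real.log ((riemannZeta (2 * σ)).re) =
        (1 / 2) * Real.log ((riemannZeta σ).re ^ 2 / (riemannZeta (2 * σ)).re) ∧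
      0 < Real.log ((riemannZeta σ).re) - (1 / 2) * Real.log ((riemannZeta (2 * σ)).re)) ∧
    StrictAntiOn
      (fun σ : ℝ => Real.log ((riemannZeta σ).re) - (1 / 2) * Real.log ((riemannZeta (2 * σ)).re))
      (Set.Ioi 1) := by
  constructor
  · intro σ hσ
    have h2σ : 1 < 2 * σ := by linarith
    constructor
    · have ha := zeta_re_pos hσ
      have hb : 0 < (riemannZeta (2 * (σ:ℂ))).re := by
        rw [show (2 * (σ:ℂ)) = ((2*σ:ℝ):ℂ) by push_cast; ring]
        exact zeta_re_pos h2σ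
      rw [Real.log_div (pow_ne_zero 2 ha.ne') hb.ne', Real.log_pow]
      push_cast
      ring
    · rw [F_eq hσ]
      exact Summable.tsum_pos (summable_F hσ) (fun p => (term_pos p hσ).le) ⟨2, Nat.prime_two⟩
        (term_pos _ hσ)
  · intro σ₁ hσ₁ σ₂ hσ₂ h12
    simp only [Set.mem_Ioi] at hσ₁ hσ₂
    simp only
    rw [F_eq hσ₁, F_eq hσ₂]
    exact Summable.tsum_lt_tsum (fun p => term_mono p hσ₁ hσ₂ h12) (term_strict hσ₁ hσ₂ h12)
      (summable_F hσ₂) (summable_F hσ₁)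
end

section
/- For σ > 1 real and any real t, the value -∑_{p prime} Log(1 - p^{-(σ+it)}) lies in the closed disk centered at (1/2) log ζ(2σ) of radius (1/2) log(ζ(σ)²/ζ(2σ)). -/
set_option autoImplicit false

open Complex

namespace Stmt6Aux

open Real Set


lemma sinh_le_mul_cosh {x : ℝ} (hx : 0 ≤ x) : Real.sinh x ≤ x * Real.cosh x := by
  have h : ∀ y : ℝ, HasDerivAt (fun b => b * Real.cosh b - Real.sinh b) (y * Real.sinh y) y := by
    intro y
    have := ((hasDerivAt_id y).mul (Real.hasDerivAt_cosh y)).sub (Real.hasDerivAt_sinh y)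
    exact this.congr_deriv (by simp only [id_eq, one_mul]; ring)
  have hm : Monotone (fun b => b * Real.cosh b - Real.sinh b) := by
    apply monotone_of_deriv_nonneg
    · exact fun y => (h y).differentiableAt
    · intro y
      rw [(h y).deriv]
      rcases le_or_gt 0 y with hy | hy
      · exact mul_nonneg hy (Real.sinh_nonneg_iff.mpr hy)
      · have : Real.sinh y ≤ 0 := Real.sinh_nonpos_iff.mpr hy.le
        nlinarith
  have := hm hx
  simpa using this

lemma mul_cos_le_sin {x : ℝ} (hx : 0 ≤ x) (hx2 : x ≤ Real.pi) : x * Real.cos x ≤ Real.sin x := by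
  have h : ∀ y : ℝ, HasDerivAt (fun b => Real.sin b - b * Real.cos b) (y * Real.sin y) y := by
    intro y
    have := (Real.hasDerivAt_sin y).sub ((hasDerivAt_id y).mul (Real.hasDerivAt_cos y))
    exact this.congr_deriv (by simp only [id_eq, one_mul]; ring)
  have hm : MonotoneOn (fun b => Real.sin b - b * Real.cos b) (Icc 0 Real.pi) := by
    apply monotoneOn_of_deriv_nonneg (convex_Icc 0 Real.pi)
    · exact Continuous.continuousOn (by continuity)
    · exact fun y _ => (h y).differentiableAt.differentiableWithinAt
    · intro y hy
      rw [interior_Icc, mem_Ioo] at hy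
      rw [(h y).deriv]
      exact mul_nonneg hy.1.le (Real.sin_nonneg_of_nonneg_of_le_pi hy.1.le hy.2.le)
  have := hm (left_mem_Icc.mpr Real.pi_pos.le) (mem_Icc.mpr ⟨hx, hx2⟩) hx
  simpa using this

lemma cos_mul_cosh_le_one {x : ℝ} (hx : 0 ≤ x) (hx2 : x ≤ Real.pi / 2) :
    Real.cos x * Real.cosh x ≤ 1 := by
  have h : ∀ y : ℝ, HasDerivAt (fun b => Real.cos b * Real.cosh b)
      (Real.cos y * Real.sinh y - Real.sin y * Real.cosh y) y := by
    intro y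
    have := (Real.hasDerivAt_cos y).mul (Real.hasDerivAt_cosh y)
    exact this.congr_deriv (by ring)
  have hm : AntitoneOn (fun b => Real.cos b * Real.cosh b) (Icc 0 (Real.pi / 2)) := by
    apply antitoneOn_of_deriv_nonpos (convex_Icc 0 (Real.pi / 2))
    · exact Continuous.continuousOn (by continuity)
    · exact fun y _ => (h y).differentiableAt.differentiableWithinAt
    · intro y hy
      rw [interior_Icc, mem_Ioo] at hy
      rw [(h y).deriv]
      have h1 : Real.sinh y ≤ y * Real.cosh y := sinh_le_mul_cosh hy.1.le
      have h2 : y * Real.cos y ≤ Real.sin y :=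
        mul_cos_le_sin hy.1.le (by linarith [Real.pi_pos])
      have hcos : 0 ≤ Real.cos y := Real.cos_nonneg_of_mem_Icc ⟨by linarith, hy.2.le⟩
      have hcosh : 0 < Real.cosh y := Real.cosh_pos y
      nlinarith
  have := hm (left_mem_Icc.mpr (by positivity)) (mem_Icc.mpr ⟨hx, hx2⟩) hx
  simpa using this

lemma sinh_div_mono : MonotoneOn (fun t : ℝ => Real.sinh t / t) (Ioi 0) := by
  apply monotoneOn_of_deriv_nonneg (convex_Ioi 0)
  · exact ContinuousOn.div Real.continuous_sinh.continuousOn continuousOn_id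
      (fun y hy => ne_of_gt hy)
  · intro y hy
    rw [interior_Ioi] at hy
    exact (((Real.hasDerivAt_sinh y).div (hasDerivAt_id y) (ne_of_gt hy))).differentiableAt.differentiableWithinAt
  · intro y hy
    rw [interior_Ioi, mem_Ioi] at hy
    have hd := (Real.hasDerivAt_sinh y).div (hasDerivAt_id y) (ne_of_gt hy)
    simp only [id_eq] at hd
    rw [show (fun t : ℝ => Real.sinh t / t) = Real.sinh / id from rfl, hd.deriv]
    have := sinh_le_mul_cosh hy.le
    have h2 : (0:ℝ) < y ^ 2 := by positivity
    rw [div_nonneg_iff]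
    left
    constructor
    · simp only [id_eq, mul_one]; nlinarith
    · positivity

lemma convexOn_cosh_sqrt : ConvexOn ℝ (Ici 0) (fun x : ℝ => Real.cosh (Real.sqrt x)) := by
  have hderiv : ∀ y : ℝ, 0 < y → HasDerivAt (fun x : ℝ => Real.cosh (Real.sqrt x))
      (Real.sinh (Real.sqrt y) / Real.sqrt y / 2) y := by
    intro y hy
    have hs := Real.hasDerivAt_sqrt (ne_of_gt hy)
    have := (Real.hasDerivAt_cosh (Real.sqrt y)).comp y hs
    exact this.congr_deriv (by ring)
  apply MonotoneOn.convexOn_of_deriv (convex_Ici 0)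
  · exact (Real.continuous_cosh.comp Real.continuous_sqrt).continuousOn
  · intro y hy
    rw [interior_Ici] at hy
    exact (hderiv y hy).differentiableAt.differentiableWithinAt
  · rw [interior_Ici]
    intro u hu v hv huv
    rw [(hderiv u hu).deriv, (hderiv v hv).deriv]
    have h1 : Real.sqrt u ≤ Real.sqrt v := Real.sqrt_le_sqrt huv
    have h2 : (0:ℝ) < Real.sqrt u := Real.sqrt_pos.mpr hu
    have h3 : (0:ℝ) < Real.sqrt v := Real.sqrt_pos.mpr hv
    have := sinh_div_mono (mem_Ioi.mpr h2) (mem_Ioi.mpr h3) h1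
    gcongr

lemma cosh_sqrt_le_cosh_mul_cosh (a b : ℝ) :
    Real.cosh (Real.sqrt (a ^ 2 + b ^ 2)) ≤ Real.cosh a * Real.cosh b := by
  have h := convexOn_cosh_sqrt.2 (mem_Ici.mpr (sq_nonneg (a + b))) (mem_Ici.mpr (sq_nonneg (a - b)))
    (by norm_num : (0:ℝ) ≤ 1/2) (by norm_num : (0:ℝ) ≤ 1/2) (by norm_num)
  simp only [smul_eq_mul] at h
  have e1 : (1/2 : ℝ) * (a + b) ^ 2 + (1/2 : ℝ) * (a - b) ^ 2 = a ^ 2 + b ^ 2 := by ring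
  rw [e1] at h
  have e2 : Real.sqrt ((a + b) ^ 2) = |a + b| := Real.sqrt_sq_eq_abs _
  have e3 : Real.sqrt ((a - b) ^ 2) = |a - b| := Real.sqrt_sq_eq_abs _
  rw [e2, e3] at h
  have e4 : Real.cosh |a + b| = Real.cosh (a + b) := Real.cosh_abs _
  have e5 : Real.cosh |a - b| = Real.cosh (a - b) := Real.cosh_abs _
  rw [e4, e5, Real.cosh_add, Real.cosh_sub] at h
  calc Real.cosh (Real.sqrt (a ^ 2 + b ^ 2)) ≤ _ := h
    _ = Real.cosh a * Real.cosh b := by ring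

lemma key_K {a b r : ℝ} (hr : 0 ≤ r) (hb : |b| ≤ Real.pi / 2)
    (h : Real.cosh a ≤ Real.cosh r * Real.cos b) : Real.sqrt (a ^ 2 + b ^ 2) ≤ r := by
  have hcb : Real.cos b * Real.cosh b ≤ 1 := by
    have := cos_mul_cosh_le_one (abs_nonneg b) hb
    rwa [Real.cos_abs, Real.cosh_abs] at this
  have h1 : Real.cosh (Real.sqrt (a ^ 2 + b ^ 2)) ≤ Real.cosh r := by
    calc Real.cosh (Real.sqrt (a ^ 2 + b ^ 2)) ≤ Real.cosh a * Real.cosh b :=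
          cosh_sqrt_le_cosh_mul_cosh a b
      _ ≤ (Real.cosh r * Real.cos b) * Real.cosh b :=
          mul_le_mul_of_nonneg_right h (Real.cosh_pos b).le
      _ = Real.cosh r * (Real.cos b * Real.cosh b) := by ring
      _ ≤ Real.cosh r * 1 := mul_le_mul_of_nonneg_left hcb (Real.cosh_pos r).le
      _ = Real.cosh r := mul_one _
  have := Real.cosh_le_cosh.mp h1
  rwa [_root_.abs_of_nonneg (Real.sqrt_nonneg _), _root_.abs_of_nonneg hr] at this

lemma disk_lemma {z : ℂ} (hz : ‖z‖ < 1) :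
    ‖-(Complex.log (1 - z)) + (((1/2) * Real.log (1 - ‖z‖ ^ 2) : ℝ) : ℂ)‖
      ≤ (1/2) * Real.log ((1 + ‖z‖) / (1 - ‖z‖)) := by
  set x := ‖z‖ with hxdef
  have hx0 : 0 ≤ x := norm_nonneg z
  have h1x : (0:ℝ) < 1 - x := by linarith
  have h1x2 : (0:ℝ) < 1 - x ^ 2 := by nlinarith
  set u : ℂ := 1 - z with hudef
  have hre : 0 < u.re := by
    have : z.re ≤ x := Complex.re_le_norm z
    simp only [hudef, Complex.sub_re, Complex.one_re]
    linarith
  have hu : u ≠ 0 := fun h => by simp [h] at hre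
  set ρ := ‖u‖ with hρdef
  have hρ : 0 < ρ := norm_pos_iff.mpr hu
  set b := Complex.arg u with hbdef
  have hb : |b| < Real.pi / 2 := Complex.abs_arg_lt_pi_div_two_iff.mpr (Or.inl hre)
  have hcos : Real.cos b = u.re / ρ := Complex.cos_arg hu
  set m := Real.sqrt (1 - x ^ 2) with hmdef
  have hm : 0 < m := Real.sqrt_pos.mpr h1x2
  have hm2 : m ^ 2 = 1 - x ^ 2 := Real.sq_sqrt h1x2.le
  -- the constraint |u - 1| = x
  have hcon : ρ ^ 2 - 2 * u.re + 1 = x ^ 2 := by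
    have h1 : ρ ^ 2 = u.re ^ 2 + u.im ^ 2 := by
      rw [hρdef, Complex.sq_norm, Complex.normSq_apply]; ring
    have h2 : x ^ 2 = z.re ^ 2 + z.im ^ 2 := by
      rw [hxdef, Complex.sq_norm, Complex.normSq_apply]; ring
    have h3 : u.re = 1 - z.re := by simp [hudef]
    have h4 : u.im = -z.im := by simp [hudef]
    rw [h1, h2, h3, h4]; ring
  set r := (1/2) * Real.log ((1 + x) / (1 - x)) with hrdef
  have hq : (0:ℝ) < (1 + x) / (1 - x) := by positivity
  have hr0 : 0 ≤ r := by
    apply mul_nonneg (by norm_num)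
    apply Real.log_nonneg
    rw [le_div_iff₀ h1x]; linarith
  have hexp : Real.exp r = Real.sqrt ((1 + x) / (1 - x)) := by
    rw [hrdef, Real.sqrt_eq_rpow, Real.rpow_def_of_pos hq]
    ring_nf
  have hsq2 : Real.sqrt ((1 + x) / (1 - x)) ^ 2 = (1 + x) / (1 - x) := Real.sq_sqrt hq.le
  have hsqpos : 0 < Real.sqrt ((1 + x) / (1 - x)) := Real.sqrt_pos.mpr hq
  have hsqm : Real.sqrt ((1 + x) / (1 - x)) * (1 - x) = m := by
    have e0 : (1:ℝ) - x ^ 2 = ((1 + x) / (1 - x)) * (1 - x) ^ 2 := by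
      field_simp; ring
    rw [hmdef, e0, Real.sqrt_mul hq.le, Real.sqrt_sq h1x.le]
  have e1 : m * Real.sqrt ((1 + x) / (1 - x)) = 1 + x := by
    calc m * Real.sqrt ((1 + x) / (1 - x))
        = Real.sqrt ((1 + x) / (1 - x)) ^ 2 * (1 - x) := by rw [← hsqm]; ring
      _ = 1 + x := by rw [hsq2]; field_simp
  have e2 : m * (Real.sqrt ((1 + x) / (1 - x)))⁻¹ = 1 - x := by
    rw [← hsqm, mul_comm _ (1 - x), mul_assoc, mul_inv_cancel₀ hsqpos.ne', mul_one]
  have hcoshr : m * Real.cosh r = 1 := by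
    rw [Real.cosh_eq, hexp, Real.exp_neg, hexp]
    have e3 : m * ((Real.sqrt ((1 + x) / (1 - x)) + (Real.sqrt ((1 + x) / (1 - x)))⁻¹) / 2)
        = (m * Real.sqrt ((1 + x) / (1 - x)) + m * (Real.sqrt ((1 + x) / (1 - x)))⁻¹) / 2 := by
      ring
    rw [e3, e1, e2]
    ring
  set a := Real.log (ρ / m) with hadef
  have hcosha : Real.cosh a = (ρ / m + m / ρ) / 2 := by
    rw [hadef, Real.cosh_eq, Real.exp_log (by positivity), Real.exp_neg,
      Real.exp_log (by positivity), inv_div]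
  -- main inequality
  have hmain : Real.cosh a ≤ Real.cosh r * Real.cos b := by
    have hcoshr' : Real.cosh r = 1 / m := by
      field_simp at hcoshr ⊢
      linarith [hcoshr]
    rw [hcosha, hcoshr', hcos]
    have key : ρ ^ 2 + m ^ 2 ≤ 2 * u.re := by nlinarith [hcon, hm2]
    have ediff : 1 / m * (u.re / ρ) - (ρ / m + m / ρ) / 2
        = (2 * u.re - (ρ ^ 2 + m ^ 2)) / (2 * m * ρ) := by
      field_simp
    have hpos : 0 ≤ (2 * u.re - (ρ ^ 2 + m ^ 2)) / (2 * m * ρ) :=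
      div_nonneg (by linarith) (by positivity)
    linarith [ediff, hpos]
  have hK := key_K hr0 hb.le hmain
  -- identify the complex quantity
  have hlogm : Real.log m = (1/2) * Real.log (1 - x ^ 2) := by
    rw [hmdef, Real.log_sqrt h1x2.le]; ring
  have ha' : a = Real.log ρ - Real.log m := Real.log_div hρ.ne' hm.ne'
  have hQ : -(Complex.log u) + (((1/2) * Real.log (1 - x ^ 2) : ℝ) : ℂ)
      = ((-a : ℝ) : ℂ) + ((-b : ℝ) : ℂ) * Complex.I := by
    apply Complex.ext
    · simp [Complex.log_re, Complex.add_re, Complex.neg_re, ha', hlogm, hρdef]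
      ring
    · simp [Complex.log_im, hbdef]
  rw [hudef] at hQ
  rw [hQ, Complex.norm_add_mul_I]
  rw [show (-a) ^ 2 + (-b) ^ 2 = a ^ 2 + b ^ 2 by ring]
  exact hK


lemma prime_rpow_lt_half {σ' : ℝ} (h : 1 ≤ σ') (p : Nat.Primes) :
    ((p : ℕ) : ℝ) ^ (-σ') ≤ 1 / 2 := by
  have hp2 : (2 : ℝ) ≤ ((p : ℕ) : ℝ) := by exact_mod_cast p.prop.two_le
  calc ((p : ℕ) : ℝ) ^ (-σ') ≤ (2 : ℝ) ^ (-σ') :=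
        Real.rpow_le_rpow_of_nonpos two_pos hp2 (by linarith)
    _ ≤ (2 : ℝ) ^ (-1 : ℝ) :=
        Real.rpow_le_rpow_of_exponent_le one_le_two (by linarith)
    _ = 1 / 2 := by
        rw [Real.rpow_neg_one]; norm_num

lemma prime_rpow_pos {σ' : ℝ} (p : Nat.Primes) : 0 < ((p : ℕ) : ℝ) ^ (-σ') := by
  have hp2 : (0 : ℝ) < ((p : ℕ) : ℝ) := by
    have := p.prop.two_le; positivity
  positivity

lemma summable_prime_rpow {σ' : ℝ} (h : 1 < σ') :
    Summable (fun p : Nat.Primes => ((p : ℕ) : ℝ) ^ (-σ')) :=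
  Nat.Primes.summable_rpow.mpr (by linarith)

lemma summable_neg_log_real {σ' : ℝ} (h : 1 < σ') :
    Summable (fun p : Nat.Primes => -Real.log (1 - ((p : ℕ) : ℝ) ^ (-σ'))) := by
  apply Summable.of_nonneg_of_le (f := fun p : Nat.Primes => 2 * ((p : ℕ) : ℝ) ^ (-σ'))
  · intro p
    have h1 : ((p : ℕ) : ℝ) ^ (-σ') ≤ 1 / 2 := prime_rpow_lt_half h.le p
    have h2 : (0 : ℝ) < ((p : ℕ) : ℝ) ^ (-σ') := prime_rpow_pos p
    simp only [neg_nonneg]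
    apply Real.log_nonpos <;> nlinarith
  · intro p
    have h1 : ((p : ℕ) : ℝ) ^ (-σ') ≤ 1 / 2 := prime_rpow_lt_half h.le p
    have h2 : (0 : ℝ) < ((p : ℕ) : ℝ) ^ (-σ') := prime_rpow_pos p
    set y := ((p : ℕ) : ℝ) ^ (-σ')
    have h3 : (0:ℝ) < 1 - y := by linarith
    have h4 : Real.log ((1 - y)⁻¹) ≤ (1 - y)⁻¹ - 1 :=
      Real.log_le_sub_one_of_pos (by positivity)
    rw [Real.log_inv] at h4
    have h5 : (1 - y)⁻¹ - 1 = y / (1 - y) := by field_simp; ring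
    have h6 : y / (1 - y) ≤ 2 * y := by
      rw [div_le_iff₀ h3]; nlinarith
    linarith
  · exact (summable_prime_rpow h).mul_left 2

lemma cast_term_eq {σ' : ℝ} (h : 1 < σ') (p : Nat.Primes) :
    ((-Real.log (1 - ((p : ℕ) : ℝ) ^ (-σ')) : ℝ) : ℂ)
      = -Complex.log (1 - ((p : ℕ) : ℂ) ^ (-(σ' : ℂ))) := by
  have h1 : ((p : ℕ) : ℝ) ^ (-σ') ≤ 1 / 2 := prime_rpow_lt_half h.le p
  have hpos : (0:ℝ) ≤ 1 - ((p : ℕ) : ℝ) ^ (-σ') := by linarith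
  have hc : ((((p : ℕ) : ℝ) ^ (-σ') : ℝ) : ℂ) = ((p : ℕ) : ℂ) ^ (-(σ' : ℂ)) := by
    rw [Complex.ofReal_cpow (by positivity) (-σ')]
    push_cast
    rfl
  rw [Complex.ofReal_neg, Complex.ofReal_log hpos]
  congr 1
  push_cast
  rw [hc]

lemma summable_neg_clog {s : ℂ} (hs : 1 < s.re) :
    Summable (fun p : Nat.Primes => -Complex.log (1 - ((p : ℕ) : ℂ) ^ (-s))) := by
  apply Summable.neg
  apply Summable.of_norm
  apply Summable.of_nonneg_of_le (f := fun p : Nat.Primes => (3/2) * ((p : ℕ) : ℝ) ^ (-s.re))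
    (fun p => norm_nonneg _)
  · intro p
    have habs : ‖((p : ℕ) : ℂ) ^ (-s)‖ = ((p : ℕ) : ℝ) ^ (-s.re) := by
      have hp : (0 : ℝ) < ((p : ℕ) : ℝ) := by have := p.prop.two_le; positivity
      rw [show ((p : ℕ) : ℂ) = ((((p : ℕ) : ℝ)) : ℂ) by push_cast; rfl]
      rw [Complex.norm_cpow_eq_rpow_re_of_pos hp]
      simp
    have hhalf : ‖-((p : ℕ) : ℂ) ^ (-s)‖ ≤ 1 / 2 := by
      rw [norm_neg, habs]
      exact prime_rpow_lt_half hs.le p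
    have := Complex.norm_log_one_add_half_le_self hhalf
    rw [show (1 : ℂ) + -((p : ℕ) : ℂ) ^ (-s) = 1 - ((p : ℕ) : ℂ) ^ (-s) by ring,
      norm_neg] at this
    calc ‖Complex.log (1 - ((p : ℕ) : ℂ) ^ (-s))‖ ≤ 3 / 2 * ‖((p : ℕ) : ℂ) ^ (-s)‖ := this
      _ = 3 / 2 * ((p : ℕ) : ℝ) ^ (-s.re) := by rw [habs]
  · exact (summable_prime_rpow hs).mul_left _

lemma zeta_re_eq_exp {σ' : ℝ} (h : 1 < σ') :
    (riemannZeta (σ' : ℂ)).re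
      = Real.exp (∑' p : Nat.Primes, -Real.log (1 - ((p : ℕ) : ℝ) ^ (-σ'))) := by
  have hre : 1 < (σ' : ℂ).re := by simpa using h
  have hEP := riemannZeta_eulerProduct_exp_log hre
  have hcast : (((∑' p : Nat.Primes, -Real.log (1 - ((p : ℕ) : ℝ) ^ (-σ'))) : ℝ) : ℂ)
      = ∑' p : Nat.Primes, -Complex.log (1 - ((p : ℕ) : ℂ) ^ (-(σ' : ℂ))) := by
    rw [Complex.ofReal_tsum]
    exact tsum_congr (fun p => cast_term_eq h p)
  have : riemannZeta (σ' : ℂ)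
      = ((Real.exp (∑' p : Nat.Primes, -Real.log (1 - ((p : ℕ) : ℝ) ^ (-σ'))) : ℝ) : ℂ) := by
    rw [Complex.ofReal_exp, hcast]
    rw [← hEP]
  rw [this, Complex.ofReal_re]


lemma term_bound (σ t : ℝ) (hσ : 1 < σ) (p : Nat.Primes) :
    ‖-Complex.log (1 - ((p : ℕ) : ℂ) ^ (-((σ : ℂ) + (t : ℂ) * I)))
        - (((1/2) * (-Real.log (1 - ((p : ℕ) : ℝ) ^ (-(2 * σ)))) : ℝ) : ℂ)‖
      ≤ (-Real.log (1 - ((p : ℕ) : ℝ) ^ (-σ)))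
        - (1/2) * (-Real.log (1 - ((p : ℕ) : ℝ) ^ (-(2 * σ)))) := by
  have hp : (0 : ℝ) < ((p : ℕ) : ℝ) := by have := p.prop.two_le; positivity
  set z := ((p : ℕ) : ℂ) ^ (-((σ : ℂ) + (t : ℂ) * I)) with hzdef
  have habs : ‖z‖ = ((p : ℕ) : ℝ) ^ (-σ) := by
    rw [hzdef, show ((p : ℕ) : ℂ) = ((((p : ℕ) : ℝ)) : ℂ) by push_cast; rfl,
      Complex.norm_cpow_eq_rpow_re_of_pos hp]
    norm_num
  have hhalf : ‖z‖ ≤ 1 / 2 := by rw [habs]; exact prime_rpow_lt_half hσ.le p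
  have hx1 : ‖z‖ < 1 := lt_of_le_of_lt hhalf (by norm_num)
  have hsq : ‖z‖ ^ 2 = ((p : ℕ) : ℝ) ^ (-(2 * σ)) := by
    rw [habs, ← Real.rpow_natCast (((p : ℕ) : ℝ) ^ (-σ)) 2, ← Real.rpow_mul hp.le]
    norm_num
    ring_nf
  have hD := disk_lemma hx1
  have e : -Complex.log (1 - z)
        - (((1/2) * (-Real.log (1 - ((p : ℕ) : ℝ) ^ (-(2 * σ)))) : ℝ) : ℂ)
      = -Complex.log (1 - z) + (((1/2) * Real.log (1 - ‖z‖ ^ 2) : ℝ) : ℂ) := by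
    rw [hsq]; push_cast; ring
  rw [e]
  refine le_trans hD (le_of_eq ?_)
  rw [← habs, ← hsq]
  set x := ‖z‖
  have hx0 : 0 ≤ x := norm_nonneg z
  have h1x : (0:ℝ) < 1 - x := by linarith
  have h1x' : (0:ℝ) < 1 + x := by linarith
  have l1 : Real.log ((1 + x) / (1 - x)) = Real.log (1 + x) - Real.log (1 - x) :=
    Real.log_div h1x'.ne' h1x.ne'
  have l2 : Real.log (1 - x ^ 2) = Real.log (1 + x) + Real.log (1 - x) := by
    rw [show (1:ℝ) - x ^ 2 = (1 + x) * (1 - x) by ring, Real.log_mul h1x'.ne' h1x.ne']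
  rw [l1, l2]
  ring

end Stmt6Aux

open Stmt6Aux

theorem stmt6 (σ t : ℝ) (hσ : 1 < σ) :
    dist (-∑' p : Nat.Primes, Complex.log (1 - ((p : ℕ) : ℂ) ^ (-(σ + t * I))))
        (((1 / 2) * Real.log ((riemannZeta (2 * σ)).re) : ℝ) : ℂ) ≤
      (1 / 2) * Real.log ((riemannZeta σ).re ^ 2 / (riemannZeta (2 * σ)).re) := by
  have h2σ : 1 < 2 * σ := by linarith
  have hsre1 : 1 < ((σ : ℂ) + (t : ℂ) * I).re := by simpa using hσ
  set T₁ : ℝ := ∑' p : Nat.Primes, -Real.log (1 - ((p : ℕ) : ℝ) ^ (-σ)) with hT1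
  set T₂ : ℝ := ∑' p : Nat.Primes, -Real.log (1 - ((p : ℕ) : ℝ) ^ (-(2 * σ))) with hT2
  have hsum1 := summable_neg_log_real hσ
  have hsum2 := summable_neg_log_real h2σ
  have hsumg : Summable (fun p : Nat.Primes =>
      (1/2) * (-Real.log (1 - ((p : ℕ) : ℝ) ^ (-(2 * σ))))) := hsum2.mul_left _
  have hz1 : (riemannZeta σ).re = Real.exp T₁ := zeta_re_eq_exp hσ
  have hz2 : (riemannZeta (2 * σ)).re = Real.exp T₂ := by
    have h := zeta_re_eq_exp h2σ
    rw [show (((2 * σ : ℝ)) : ℂ) = 2 * (σ : ℂ) by push_cast; ring] at h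
    exact h
  rw [hz1, hz2, Real.log_exp]
  have hRHS : (1 / 2) * Real.log (Real.exp T₁ ^ 2 / Real.exp T₂) = T₁ - (1/2) * T₂ := by
    rw [Real.log_div (by positivity) (Real.exp_ne_zero _), Real.log_pow, Real.log_exp,
      Real.log_exp]
    push_cast; ring
  rw [hRHS, Complex.dist_eq, ← tsum_neg]
  have hsumf := summable_neg_clog hsre1
  have hsumgC : Summable (fun p : Nat.Primes =>
      (((1/2) * (-Real.log (1 - ((p : ℕ) : ℝ) ^ (-(2 * σ)))) : ℝ) : ℂ)) := by
    rwa [Complex.summable_ofReal]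
  have hC : (((1 / 2) * T₂ : ℝ) : ℂ)
      = ∑' p : Nat.Primes, (((1/2) * (-Real.log (1 - ((p : ℕ) : ℝ) ^ (-(2 * σ)))) : ℝ) : ℂ) := by
    rw [← Complex.ofReal_tsum, tsum_mul_left]
  rw [hC]
  rw [← Summable.tsum_sub hsumf hsumgC]
  have hsumr : Summable (fun p : Nat.Primes =>
      (-Real.log (1 - ((p : ℕ) : ℝ) ^ (-σ)))
        - (1/2) * (-Real.log (1 - ((p : ℕ) : ℝ) ^ (-(2 * σ))))) := hsum1.sub hsumg
  have hbound := fun p : Nat.Primes => term_bound σ t hσ p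
  have hsumnorm : Summable (fun p : Nat.Primes =>
      ‖-Complex.log (1 - ((p : ℕ) : ℂ) ^ (-((σ : ℂ) + (t : ℂ) * I)))
        - (((1/2) * (-Real.log (1 - ((p : ℕ) : ℝ) ^ (-(2 * σ)))) : ℝ) : ℂ)‖) :=
    Summable.of_nonneg_of_le (fun p => norm_nonneg _) hbound hsumr
  calc ‖∑' p : Nat.Primes, (-Complex.log (1 - ((p : ℕ) : ℂ) ^ (-((σ : ℂ) + (t : ℂ) * I)))
        - (((1/2) * (-Real.log (1 - ((p : ℕ) : ℝ) ^ (-(2 * σ)))) : ℝ) : ℂ))‖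
      ≤ ∑' p : Nat.Primes, ‖-Complex.log (1 - ((p : ℕ) : ℂ) ^ (-((σ : ℂ) + (t : ℂ) * I)))
        - (((1/2) * (-Real.log (1 - ((p : ℕ) : ℝ) ^ (-(2 * σ)))) : ℝ) : ℂ)‖ :=
        norm_tsum_le_tsum_norm hsumnorm
    _ ≤ ∑' p : Nat.Primes, ((-Real.log (1 - ((p : ℕ) : ℝ) ^ (-σ)))
        - (1/2) * (-Real.log (1 - ((p : ℕ) : ℝ) ^ (-(2 * σ))))) :=
        Summable.tsum_le_tsum hbound hsumnorm hsumr
    _ = T₁ - (1/2) * T₂ := by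
        rw [Summable.tsum_sub hsum1 hsumg, tsum_mul_left]
end
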